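/- Let q̃ be the allocation of a Nash equilibrium θ̃ with p(θ̃) > 0 in the strategic prosumer game, where each prosumer's payoff is concave in its own parameter. Then for each i: if q̃_i > -s_max then S_i'(q̃_i)·(1 + q̃_i/((N-1)d_min)) = p(θ̃), and if q̃_i = -s_max then S_i'(q̃_i)·(1 + q̃_i/((N-1)d_min)) ≤ p(θ̃). These are exactly the KKT optimality conditions for maximizing ∑_i S̃_i(q_i) subject to ∑_i q_i = 0 and q_i ≥ -s_max, with multiplier η̃ = p(θ̃); hence the Nash equilibrium allocation q̃ is the unique maximizer of the modified welfare program. -/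

import Mathlib

/-- Market clearing price `p(θ) = -(∑ⱼ θⱼ)/(N d_min)`. -/
noncomputable def price (N : ℕ) (dmin : ℝ) (θ : Fin N → ℝ) : ℝ :=
  -(∑ j, θ j) / (N * dmin)

/-- Strategic payoff `πᵢ(θ) = Sᵢ(Q(θᵢ, p(θ))) - p(θ)·Q(θᵢ, p(θ))` with
`Q(θᵢ, p) = d_min + θᵢ/p`. -/
noncomputable def payoff (N : ℕ) (dmin : ℝ) (S : Fin N → ℝ → ℝ)
    (θ : Fin N → ℝ) (i : Fin N) : ℝ :=
  S i (dmin + θ i / price N dmin θ) - price N dmin θ * (dmin + θ i / price N dmin θ)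

/-- The modified utility/cost function `S̃`. -/
noncomputable def Stilde (N : ℕ) (dmin : ℝ) (S : ℝ → ℝ) : ℝ → ℝ :=
  fun q => (1 + q / (((N : ℝ) - 1) * dmin)) * S q
    - (1 / (((N : ℝ) - 1) * dmin)) * ∫ z in dmin..q, S z

/-- derivative nonneg for strictly monotone differentiable function -/
lemma aux_deriv_nonneg {f : ℝ → ℝ} (hf : Differentiable ℝ f) (hm : StrictMono f) (x : ℝ) :
    0 ≤ deriv f x := by
  have h := (hf x).hasDerivAt
  rw [hasDerivAt_iff_tendsto_slope] at h
  refine ge_of_tendsto h ?_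
  filter_upwards [self_mem_nhdsWithin] with t ht
  rcases lt_or_gt_of_ne (ht : t ≠ x) with h1 | h1
  · rw [slope_def_field]
    exact div_nonneg_of_nonpos (sub_nonpos.mpr (hm h1).le) (sub_nonpos.mpr h1.le)
  · rw [slope_def_field]
    exact div_nonneg (sub_nonneg.mpr (hm h1).le) (sub_nonneg.mpr h1.le)

example : True := trivial

/-- derivative of Stilde -/
lemma aux_stilde_deriv (N : ℕ) (dmin : ℝ) (hA : ((N:ℝ)-1)*dmin ≠ 0) {S : ℝ → ℝ}
    (hS : Differentiable ℝ S) (x : ℝ) :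
    HasDerivAt (Stilde N dmin S) ((1 + x/(((N:ℝ)-1)*dmin)) * deriv S x) x := by
  set A := ((N:ℝ)-1)*dmin with hAdef
  have hSc : Continuous S := hS.continuous
  have h1 : HasDerivAt (fun q => (1 + q / A) * S q)
      ((1/A) * S x + (1 + x/A) * deriv S x) x := by
    have := (((hasDerivAt_id x).div_const A).const_add 1).mul (hS x).hasDerivAt
    exact this
  have h2 : HasDerivAt (fun q : ℝ => ∫ z in dmin..q, S z) (S x) x :=
    intervalIntegral.integral_hasDerivAt_right (hSc.intervalIntegrable _ _)
      (hSc.stronglyMeasurable.stronglyMeasurableAtFilter) hSc.continuousAt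
  have h3 := h1.sub (h2.const_mul (1/A))
  have he : (1 + x/A) * deriv S x
      = (1/A) * S x + (1 + x/A) * deriv S x - 1/A * S x := by ring
  rw [he]
  exact h3

/-- strict concavity inequality from strictly decreasing derivative -/
lemma aux_key_ineq {F F' : ℝ → ℝ} {m : ℝ} (hF : ∀ x, HasDerivAt F (F' x) x)
    (hanti : ∀ q q' : ℝ, m ≤ q → q < q' → F' q' < F' q)
    {a b : ℝ} (ha : m ≤ a) (hb : m ≤ b) (hne : a ≠ b) :
    F a - F b < F' b * (a - b) := by
  rcases lt_or_gt_of_ne hne with h | h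
  · obtain ⟨c, hc, hceq⟩ := exists_hasDerivAt_eq_slope F F' h
      (fun x _ => (hF x).continuousAt.continuousWithinAt) (fun x hx => hF x)
    have h1 : F' b < F' c := hanti c b (le_of_lt (lt_of_le_of_lt ha hc.1)) hc.2
    have hba : 0 < b - a := sub_pos.mpr h
    rw [hceq] at h1
    rw [lt_div_iff₀ hba] at h1
    nlinarith
  · obtain ⟨c, hc, hceq⟩ := exists_hasDerivAt_eq_slope F F' h
      (fun x _ => (hF x).continuousAt.continuousWithinAt) (fun x hx => hF x)
    have h1 : F' c < F' b := hanti b c hb hc.1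
    have hab : 0 < a - b := sub_pos.mpr h
    rw [hceq] at h1
    rw [div_lt_iff₀ hab] at h1
    nlinarith

/-- Theorem 2: at a Nash equilibrium `θ̃` with positive price
and own-parameter-concave payoffs, the allocation `q̃ᵢ = Q(θ̃ᵢ, p(θ̃))`
satisfies the KKT conditions
`Sᵢ'(q̃ᵢ)(1 + q̃ᵢ/((N-1)d_min)) = p(θ̃)` if `q̃ᵢ > -s_max` (and `≤` at the
bound), i.e. those of maximizing `∑ᵢ S̃ᵢ(qᵢ)` over the feasible set with
multiplier `η̃ = p(θ̃)`; hence `q̃` is the unique maximizer of the modified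
welfare program. -/
theorem stmt15 (N : ℕ) (hN : 2 ≤ N) (dmin smax : ℝ) (hd : 0 < dmin) (hs : 0 < smax)
    (S : Fin N → ℝ → ℝ) (hC2 : ∀ i, ContDiff ℝ 2 (S i)) (hmono : ∀ i, StrictMono (S i))
    (hcond : ∀ i, ∀ q q' : ℝ, -smax ≤ q → q < q' →
      (1 + q' / (((N : ℝ) - 1) * dmin)) * deriv (S i) q'
        < (1 + q / (((N : ℝ) - 1) * dmin)) * deriv (S i) q)
    (θ : Fin N → ℝ) (hp : 0 < price N dmin θ)
    (hconc : ∀ i, ConcaveOn ℝ Set.univ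
      (fun t => payoff N dmin S (Function.update θ i t) i))
    (hNash : ∀ (i : Fin N) (t : ℝ),
      -smax ≤ dmin + t / price N dmin (Function.update θ i t) →
      payoff N dmin S (Function.update θ i t) i ≤ payoff N dmin S θ i)
    (qt : Fin N → ℝ) (hq : ∀ i, qt i = dmin + θ i / price N dmin θ)
    (hfeas : ∀ i, -smax ≤ qt i)
    (hreg : ∀ i, -((N : ℝ) - 1) * dmin
        - deriv (S i) (qt i) / deriv (deriv (S i)) (qt i) ≤ qt i) :
    (∀ i, (-smax < qt i →
        deriv (S i) (qt i) * (1 + qt i / (((N : ℝ) - 1) * dmin)) = price N dmin θ) ∧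
      (qt i = -smax →
        deriv (S i) (qt i) * (1 + qt i / (((N : ℝ) - 1) * dmin)) ≤ price N dmin θ)) ∧
    (∑ i, qt i = 0) ∧
    (∀ q : Fin N → ℝ, (∑ i, q i = 0 ∧ ∀ i, -smax ≤ q i) → q ≠ qt →
      ∑ i, Stilde N dmin (S i) (q i) < ∑ i, Stilde N dmin (S i) (qt i)) := by
  have hN1 : (1:ℝ) ≤ (N:ℝ) - 1 := by
    have : (2:ℝ) ≤ (N:ℝ) := by exact_mod_cast hN
    linarith
  set A : ℝ := ((N:ℝ) - 1) * dmin with hAdef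
  have hApos : 0 < A := mul_pos (by linarith) hd
  set c : ℝ := (N:ℝ) * dmin with hcdef
  have hcpos : 0 < c := mul_pos (by linarith) hd
  set p : ℝ := price N dmin θ with hpdef
  have hpne : p ≠ 0 := ne_of_gt hp
  have hAc : c = A + dmin := by rw [hAdef, hcdef]; ring
  -- market clearing
  have hsump : ∑ j, θ j = -(p * c) := by
    have : p = -(∑ j, θ j) / c := rfl
    field_simp at this
    linarith
  have hsum0 : ∑ i, qt i = 0 := by
    have h1 : ∑ i, qt i = ∑ i : Fin N, (dmin + θ i / p) := by
      exact Finset.sum_congr rfl (fun i _ => hq i)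
    rw [h1, Finset.sum_add_distrib, ← Finset.sum_div, hsump]
    simp [Finset.card_univ]
    field_simp
    ring
  -- derivatives of the S i
  have hdiff : ∀ i, Differentiable ℝ (S i) := fun i => (hC2 i).differentiable (by norm_num)
  -- KKT conditions
  have hKKT : ∀ i, (-smax < qt i →
        deriv (S i) (qt i) * (1 + qt i / A) = p) ∧
      (qt i = -smax →
        deriv (S i) (qt i) * (1 + qt i / A) ≤ p) := by
    intro i
    set K : ℝ := (∑ j, θ j) - θ i with hKdef
    set P : ℝ → ℝ := fun t => -(K + t) / c with hPdef
    have hPrice : ∀ t, price N dmin (Function.update θ i t) = P t := by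
      intro t
      show -(∑ j, Function.update θ i t j) / ((N:ℝ) * dmin) = -(K + t) / c
      rw [Finset.sum_update_of_mem (Finset.mem_univ i),
        Finset.sum_sdiff_eq_sub (Finset.subset_univ {i}), Finset.sum_singleton,
        hKdef, ← hcdef]
      ring_nf
    set q : ℝ → ℝ := fun t => dmin + t / P t with hqdef
    have hPθ : P (θ i) = p := by
      show -(K + θ i) / c = p
      have hKe : K + θ i = ∑ j, θ j := by rw [hKdef]; ring
      rw [hKe, hsump, neg_neg]
      field_simp
    have hqθ : q (θ i) = qt i := by
      show dmin + θ i / P (θ i) = qt i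
      rw [hPθ, hq i, hpdef]
    have hθi : θ i = (qt i - dmin) * p := by
      have h := hq i
      field_simp at h
      linarith
    set g : ℝ → ℝ := fun t => S i (q t) - P t * q t with hgdef
    have hpay : ∀ t, payoff N dmin S (Function.update θ i t) i = g t := by
      intro t
      show S i (dmin + Function.update θ i t i / price N dmin (Function.update θ i t))
          - price N dmin (Function.update θ i t)
            * (dmin + Function.update θ i t i / price N dmin (Function.update θ i t)) = g t
      rw [Function.update_self, hPrice]
    have hgθ : payoff N dmin S θ i = g (θ i) := by
      rw [← hpay (θ i), Function.update_eq_self]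
    -- derivative computations
    have hP' : ∀ t, HasDerivAt P (-(1/c)) t := by
      intro t
      have h := (((hasDerivAt_id t).const_add K).neg).div_const c
      have he : (-1 : ℝ) / c = -(1/c) := by ring
      rw [he] at h
      exact h
    have hPne : P (θ i) ≠ 0 := by rw [hPθ]; exact hpne
    set qv : ℝ := (1 * p - θ i * -(1/c)) / p ^ 2 with hqvdef
    have hq' : HasDerivAt q qv (θ i) := by
      have h1 := ((hasDerivAt_id (θ i)).div (hP' (θ i)) hPne).const_add dmin
      rw [hPθ] at h1
      exact h1
    have hqv : qv = (A + qt i) / (c * p) := by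
      rw [hqvdef, hθi]
      have hAe : A = c - dmin := by rw [hAc]; ring
      rw [hAe]
      field_simp
      ring
    set D : ℝ := deriv (S i) (qt i) * qv - (-(1/c) * qt i + p * qv) with hDdef
    have hg' : HasDerivAt g D (θ i) := by
      have hS' : HasDerivAt (S i) (deriv (S i) (q (θ i))) (q (θ i)) :=
        ((hdiff i) (q (θ i))).hasDerivAt
      have h1 : HasDerivAt (fun t => S i (q t)) (deriv (S i) (q (θ i)) * qv) (θ i) :=
        hS'.comp (θ i) hq'
      have h2 : HasDerivAt (fun t => P t * q t) (-(1/c) * q (θ i) + P (θ i) * qv) (θ i) :=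
        (hP' (θ i)).mul hq'
      have h3 := h1.sub h2
      rw [hqθ, hPθ] at h3
      exact h3
    -- algebraic identity converting D to KKT form
    have halg : ∀ x : ℝ, x * qv - (-(1/c) * qt i + p * qv)
        = (A / (c * p)) * (x * (1 + qt i / A) - p) := by
      intro x
      rw [hqv]
      field_simp
      ring
    constructor
    · -- interior case
      intro hlt
      have hql : ∀ᶠ t in nhds (θ i), -smax ≤ q t := by
        have hcont : Filter.Tendsto q (nhds (θ i)) (nhds (q (θ i))) := hq'.continuousAt
        rw [hqθ] at hcont
        exact (hcont.eventually (eventually_gt_nhds hlt)).mono (fun t ht => le_of_lt ht)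
      have hmax : IsLocalMax g (θ i) := by
        filter_upwards [hql] with t ht
        have h1 := hNash i t (by rw [hPrice]; exact ht)
        rw [hpay t, hgθ] at h1
        exact h1
      have hD0 : D = 0 := by rw [← hg'.deriv]; exact hmax.deriv_eq_zero
      rw [hDdef, halg] at hD0
      have h2 : deriv (S i) (qt i) * (1 + qt i / A) - p = 0 := by
        have hAcp : A / (c * p) ≠ 0 := by positivity
        exact (mul_eq_zero.mp hD0).resolve_left hAcp
      linarith
    · -- boundary case
      intro heq
      rcases le_or_gt (A + qt i) 0 with hle | hgt
      · have h1 : 1 + qt i / A ≤ 0 := by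
          rw [← sub_nonneg]
          have : 1 + qt i / A = (A + qt i) / A := by field_simp
          rw [this]
          simp
          exact div_nonpos_iff.mpr (Or.inr ⟨hle, hApos.le⟩) |>.trans_eq rfl |> fun h => by linarith
        have h2 : 0 ≤ deriv (S i) (qt i) := aux_deriv_nonneg (hdiff i) (hmono i) _
        calc deriv (S i) (qt i) * (1 + qt i / A) ≤ 0 := mul_nonpos_of_nonneg_of_nonpos h2 h1
          _ ≤ p := hp.le
      · -- one-sided derivative argument
        have hqvpos : 0 < qv := by rw [hqv]; positivity
        have hslopeq : Filter.Tendsto (slope q (θ i)) (nhdsWithin (θ i) (Set.Ioi (θ i)))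
            (nhds qv) := by
          have := hasDerivAt_iff_tendsto_slope.mp hq'
          exact this.mono_left (nhdsWithin_mono _ (fun t ht => ne_of_gt ht))
        have h2 : ∀ᶠ t in nhdsWithin (θ i) (Set.Ioi (θ i)), 0 < slope q (θ i) t :=
          hslopeq.eventually (eventually_gt_nhds hqvpos)
        have h3 : ∀ᶠ t in nhdsWithin (θ i) (Set.Ioi (θ i)), g t ≤ g (θ i) := by
          filter_upwards [h2, self_mem_nhdsWithin] with t ht hmem
          have htgt : θ i < t := hmem
          have hfeast : -smax ≤ q t := by
            rw [slope_def_field] at ht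
            have := mul_pos ht (sub_pos.mpr htgt)
            rw [div_mul_cancel₀ _ (ne_of_gt (sub_pos.mpr htgt))] at this
            rw [hqθ, heq] at this
            linarith
          have h1 := hNash i t (by rw [hPrice]; exact hfeast)
          rw [hpay t, hgθ] at h1
          exact h1
        have h4 : Filter.Tendsto (slope g (θ i)) (nhdsWithin (θ i) (Set.Ioi (θ i)))
            (nhds D) := by
          have h5 := (hg'.hasDerivWithinAt (s := Set.Ioi (θ i)))
          rw [hasDerivWithinAt_iff_tendsto_slope] at h5
          rwa [Set.diff_singleton_eq_self (by simp)] at h5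
        have hD0 : D ≤ 0 := by
          refine le_of_tendsto h4 ?_
          filter_upwards [h3, self_mem_nhdsWithin] with t ht hmem
          rw [slope_def_field]
          exact div_nonpos_iff.mpr (Or.inr ⟨sub_nonpos.mpr ht, (sub_nonneg.mpr (le_of_lt hmem))⟩)
        rw [hDdef, halg] at hD0
        have hAcp : 0 < A / (c * p) := by positivity
        nlinarith
  refine ⟨fun i => (hKKT i), hsum0, ?_⟩
  -- uniqueness of maximizer
  intro q ⟨hq0, hqfeas⟩ hne
  have hAne : A ≠ 0 := ne_of_gt hApos
  have hSt : ∀ i x, HasDerivAt (Stilde N dmin (S i)) ((1 + x / A) * deriv (S i) x) x :=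
    fun i x => aux_stilde_deriv N dmin hAne (hdiff i) x
  have hperle : ∀ i, Stilde N dmin (S i) (q i)
      ≤ Stilde N dmin (S i) (qt i) + p * (q i - qt i) := by
    intro i
    rcases eq_or_ne (q i) (qt i) with he | hne'
    · rw [he]; simp
    · have h1 : Stilde N dmin (S i) (q i) - Stilde N dmin (S i) (qt i)
          < (1 + qt i / A) * deriv (S i) (qt i) * (q i - qt i) :=
        aux_key_ineq (hSt i) (hcond i) (hqfeas i) (hfeas i) hne'
      have h2 : (1 + qt i / A) * deriv (S i) (qt i) * (q i - qt i) ≤ p * (q i - qt i) := by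
        rcases eq_or_lt_of_le (hfeas i) with heq | hlt
        · have h3 := (hKKT i).2 heq.symm
          have h4 : 0 ≤ q i - qt i := by rw [← heq]; linarith [hqfeas i]
          have h5 : (1 + qt i / A) * deriv (S i) (qt i) ≤ p := by linarith [mul_comm (deriv (S i) (qt i)) (1 + qt i / A)]
          exact mul_le_mul_of_nonneg_right h5 h4
        · have h3 := (hKKT i).1 hlt
          have h5 : (1 + qt i / A) * deriv (S i) (qt i) = p := by rw [mul_comm]; exact h3
          rw [h5]
      linarith
  have hstrict : ∃ i0, Stilde N dmin (S i0) (q i0)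
      < Stilde N dmin (S i0) (qt i0) + p * (q i0 - qt i0) := by
    obtain ⟨i0, hi0⟩ := Function.ne_iff.mp hne
    refine ⟨i0, ?_⟩
    have h1 : Stilde N dmin (S i0) (q i0) - Stilde N dmin (S i0) (qt i0)
        < (1 + qt i0 / A) * deriv (S i0) (qt i0) * (q i0 - qt i0) :=
      aux_key_ineq (hSt i0) (hcond i0) (hqfeas i0) (hfeas i0) hi0
    have h2 : (1 + qt i0 / A) * deriv (S i0) (qt i0) * (q i0 - qt i0) ≤ p * (q i0 - qt i0) := by
      rcases eq_or_lt_of_le (hfeas i0) with heq | hlt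
      · have h3 := (hKKT i0).2 heq.symm
        have h4 : 0 ≤ q i0 - qt i0 := by rw [← heq]; linarith [hqfeas i0]
        have h5 : (1 + qt i0 / A) * deriv (S i0) (qt i0) ≤ p := by linarith [mul_comm (deriv (S i0) (qt i0)) (1 + qt i0 / A)]
        exact mul_le_mul_of_nonneg_right h5 h4
      · have h3 := (hKKT i0).1 hlt
        have h5 : (1 + qt i0 / A) * deriv (S i0) (qt i0) = p := by rw [mul_comm]; exact h3
        rw [h5]
    linarith
  obtain ⟨i0, hi0⟩ := hstrict
  have hlt : ∑ i, Stilde N dmin (S i) (q i)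
      < ∑ i, (Stilde N dmin (S i) (qt i) + p * (q i - qt i)) :=
    Finset.sum_lt_sum (fun i _ => hperle i) ⟨i0, Finset.mem_univ i0, hi0⟩
  calc ∑ i, Stilde N dmin (S i) (q i)
      < ∑ i, (Stilde N dmin (S i) (qt i) + p * (q i - qt i)) := hlt
    _ = ∑ i, Stilde N dmin (S i) (qt i) + p * (∑ i, q i - ∑ i, qt i) := by
        rw [Finset.sum_add_distrib, ← Finset.mul_sum, Finset.sum_sub_distrib]
    _ = ∑ i, Stilde N dmin (S i) (qt i) := by rw [hq0, hsum0]; ring
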